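/- Let Σ_i ⟨[r] p_i, q_i⟩ = 0 for all r ∈ ℝ^s (first-order stationarity). Then for all r ∈ ℝ^s, Σ_i ⟨(I − exp([r])) p_i, q_i⟩ ≤ ψ₂(‖r‖) · σ_P · σ_Q, where σ_P = (Σ ‖p_i‖²)^{1/2}, σ_Q = (Σ ‖q_i‖²)^{1/2}, ψ₂(x) = e^x − 1 − x. -/

import Mathlib

set_option maxHeartbeats 1000000

open scoped BigOperators RealInnerProductSpace
open Matrix

noncomputable def mulVecE {d : ℕ} (A : Matrix (Fin d) (Fin d) ℝ)
    (p : EuclideanSpace ℝ (Fin d)) : EuclideanSpace ℝ (Fin d) :=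
  Matrix.toEuclideanLin A p

def bracket {d s : ℕ} (e : {p : Fin d × Fin d // p.2 < p.1} ≃ Fin s)
    (r : EuclideanSpace ℝ (Fin s)) : Matrix (Fin d) (Fin d) ℝ :=
  fun i j =>
    if h : j < i then r (e ⟨(i, j), h⟩)
    else if h' : i < j then -r (e ⟨(j, i), h'⟩) else 0

noncomputable def psi (k : ℕ) (x : ℝ) : ℝ :=
  Real.exp x - ∑ j ∈ Finset.range k, x ^ j / (Nat.factorial j : ℝ)

/-! ### Auxiliary lemmas -/

section Aux

variable {d s : ℕ}

lemma bracket_skew (e : {p : Fin d × Fin d // p.2 < p.1} ≃ Fin s)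
    (r : EuclideanSpace ℝ (Fin s)) (i j : Fin d) : bracket e r j i = - bracket e r i j := by
  unfold bracket
  rcases lt_trichotomy i j with h | h | h
  · simp [h, asymm h]
  · simp [h, lt_irrefl]
  · simp [h, asymm h]

lemma inner_toEuclideanLin_skew (A : Matrix (Fin d) (Fin d) ℝ)
    (hA : ∀ i j, A j i = - A i j) (x y : EuclideanSpace ℝ (Fin d)) :
    ⟪Matrix.toEuclideanLin A x, y⟫ = -⟪x, Matrix.toEuclideanLin A y⟫ := by
  have hx : ∀ (z w : EuclideanSpace ℝ (Fin d)), ⟪z, w⟫ = ∑ i, z i * w i := by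
    intro z w; simp [PiLp.inner_apply, RCLike.inner_apply, mul_comm]
  have happ : ∀ (z : EuclideanSpace ℝ (Fin d)) (i : Fin d),
      Matrix.toEuclideanLin A z i = ∑ j, A i j * z j := by
    intro z i; simp [Matrix.toEuclideanLin_apply, Matrix.mulVec, dotProduct]
  rw [hx, hx]
  simp_rw [happ, Finset.sum_mul, Finset.mul_sum, ← Finset.sum_neg_distrib]
  rw [Finset.sum_comm]
  refine Finset.sum_congr rfl fun i _ => Finset.sum_congr rfl fun j _ => ?_
  rw [hA i j]; ring

lemma norm_sq_euclidean (x : EuclideanSpace ℝ (Fin d)) : ‖x‖ ^ 2 = ∑ i, x i ^ 2 := by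
  rw [← real_inner_self_eq_norm_sq]
  rw [PiLp.inner_apply]; simp [RCLike.inner_apply, sq, Real.norm_eq_abs]

lemma double_sum_bracket_sq (e : {p : Fin d × Fin d // p.2 < p.1} ≃ Fin s)
    (r : EuclideanSpace ℝ (Fin s)) :
    ∑ q : Fin d × Fin d, bracket e r q.1 q.2 ^ 2
      = 2 * ∑ p : {q : Fin d × Fin d // q.2 < q.1}, r (e p) ^ 2 := by
  classical
  set g : Fin d × Fin d → ℝ := fun q => bracket e r q.1 q.2 ^ 2 with hg
  have hlow : ∑ q ∈ Finset.univ.filter (fun q : Fin d × Fin d => q.2 < q.1), g q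
      = ∑ p : {q : Fin d × Fin d // q.2 < q.1}, r (e p) ^ 2 := by
    rw [Finset.sum_subtype (p := fun q : Fin d × Fin d => q.2 < q.1)
      (Finset.univ.filter (fun q : Fin d × Fin d => q.2 < q.1)) (fun q => by simp) g]
    refine Finset.sum_congr rfl fun p _ => ?_
    have h1 : bracket e r p.1.1 p.1.2 = r (e p) := by
      unfold bracket
      rw [dif_pos p.2]
    simp only [g, h1]
  have hswap : ∑ q ∈ Finset.univ.filter (fun q : Fin d × Fin d => ¬ q.2 < q.1), g q
      = ∑ q ∈ Finset.univ.filter (fun q : Fin d × Fin d => q.2 < q.1), g q := by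
    rw [← Finset.sum_subset (s₁ := Finset.univ.filter (fun q : Fin d × Fin d => q.1 < q.2))
      (fun q hq => by
        simp only [Finset.mem_filter, Finset.mem_univ, true_and] at hq ⊢
        exact asymm hq)
      (fun q hq hq' => by
        simp only [Finset.mem_filter, Finset.mem_univ, true_and] at hq hq'
        simp [g, bracket, hq, hq'])]
    refine Finset.sum_equiv (Equiv.prodComm (Fin d) (Fin d)) (fun q => by simp) ?_
    intro q hq
    simp only [g, Equiv.prodComm_apply, Prod.fst_swap, Prod.snd_swap]
    rw [bracket_skew]
    ring
  rw [← Finset.sum_filter_add_sum_filter_not Finset.univ (fun q : Fin d × Fin d => q.2 < q.1) g,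
    hswap, hlow]
  ring

lemma hs_sum (e : {p : Fin d × Fin d // p.2 < p.1} ≃ Fin s) (r : EuclideanSpace ℝ (Fin s)) :
    ∑ j, ‖Matrix.toEuclideanLin (bracket e r) (EuclideanSpace.single j (1:ℝ))‖ ^ 2
      = 2 * ‖r‖ ^ 2 := by
  have happ : ∀ (z : EuclideanSpace ℝ (Fin d)) (i : Fin d),
      Matrix.toEuclideanLin (bracket e r) z i = ∑ j, bracket e r i j * z j := by
    intro z i; simp [Matrix.toEuclideanLin_apply, Matrix.mulVec, dotProduct]
  have h1 : ∀ j i : Fin d,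
      Matrix.toEuclideanLin (bracket e r) (EuclideanSpace.single j (1:ℝ)) i
        = bracket e r i j := by
    intro j i
    rw [happ]
    simp [EuclideanSpace.single, Pi.single_apply]
  have h2 : ∑ j, ‖Matrix.toEuclideanLin (bracket e r) (EuclideanSpace.single j (1:ℝ))‖ ^ 2
      = ∑ j : Fin d, ∑ i : Fin d, bracket e r i j ^ 2 := by
    refine Finset.sum_congr rfl fun j _ => ?_
    rw [norm_sq_euclidean]
    exact Finset.sum_congr rfl fun i _ => by rw [h1]
  rw [h2]
  have hr : ‖r‖ ^ 2 = ∑ k, r k ^ 2 := norm_sq_euclidean r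
  have hsub : ∑ p : {q : Fin d × Fin d // q.2 < q.1}, r (e p) ^ 2 = ∑ k, r k ^ 2 :=
    Equiv.sum_comp e (fun k => r k ^ 2)
  have key : ∑ q : Fin d × Fin d, bracket e r q.1 q.2 ^ 2
      = 2 * ∑ p : {q : Fin d × Fin d // q.2 < q.1}, r (e p) ^ 2 := double_sum_bracket_sq e r
  rw [hr, ← hsub, ← key, Fintype.sum_prod_type]
  exact Finset.sum_comm

lemma parseval_onb {ι : Type*} [Fintype ι] (b : OrthonormalBasis ι ℝ (EuclideanSpace ℝ (Fin d)))
    (x : EuclideanSpace ℝ (Fin d)) : ∑ i, ⟪x, b i⟫ ^ 2 = ‖x‖ ^ 2 := by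
  rw [← real_inner_self_eq_norm_sq, ← b.sum_inner_mul_inner x x]
  exact Finset.sum_congr rfl fun i _ => by rw [sq, real_inner_comm (b i) x]

/-- Hilbert–Schmidt bound for an orthonormal pair, via Bessel. -/
lemma pair_hs_bound (T : EuclideanSpace ℝ (Fin d) →L[ℝ] EuclideanSpace ℝ (Fin d))
    (hskew : ∀ x y : EuclideanSpace ℝ (Fin d), ⟪T x, y⟫ = -⟪x, T y⟫)
    (v w : EuclideanSpace ℝ (Fin d)) (hon : Orthonormal ℝ ![v, w]) :
    ‖T v‖ ^ 2 + ‖T w‖ ^ 2 ≤ ∑ j, ‖T (EuclideanSpace.single j (1:ℝ))‖ ^ 2 := by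
  classical
  set b : OrthonormalBasis (Fin d) ℝ (EuclideanSpace ℝ (Fin d)) :=
    EuclideanSpace.basisFun (Fin d) ℝ with hb
  have hbj : ∀ j, (b j : EuclideanSpace ℝ (Fin d)) = EuclideanSpace.single j (1:ℝ) := by
    intro j; simp [hb]
  have key : ∀ u : EuclideanSpace ℝ (Fin d), ‖T u‖ ^ 2 = ∑ j, ⟪u, T (b j)⟫ ^ 2 := by
    intro u
    rw [← parseval_onb b (T u)]
    refine Finset.sum_congr rfl fun j _ => ?_
    rw [hskew u (b j), neg_sq]
  rw [key v, key w, ← Finset.sum_add_distrib]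
  simp_rw [← hbj]
  refine Finset.sum_le_sum fun j _ => ?_
  have := hon.sum_inner_products_le (𝕜 := ℝ) (T (b j)) (s := Finset.univ)
  simpa [Fin.sum_univ_two, Real.norm_eq_abs, sq_abs] using this

lemma opnorm_le_of_skew (T : EuclideanSpace ℝ (Fin d) →L[ℝ] EuclideanSpace ℝ (Fin d))
    (hskew : ∀ x y : EuclideanSpace ℝ (Fin d), ⟪T x, y⟫ = -⟪x, T y⟫) {c : ℝ} (hc : 0 ≤ c)
    (hHS : ∑ j, ‖T (EuclideanSpace.single j (1:ℝ))‖ ^ 2 ≤ 2 * c ^ 2) : ‖T‖ ≤ c := by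
  classical
  refine T.opNorm_le_bound hc fun x => ?_
  rcases Nat.eq_zero_or_pos d with hd | hd
  · have : Subsingleton (EuclideanSpace ℝ (Fin d)) := by
      subst hd; infer_instance
    rw [Subsingleton.elim x 0]
    simp
  haveI : Nonempty (Fin d) := ⟨⟨0, hd⟩⟩
  set B : EuclideanSpace ℝ (Fin d) →ₗ[ℝ] EuclideanSpace ℝ (Fin d) :=
    -(T.toLinearMap ∘ₗ T.toLinearMap) with hBdef
  have hBapp : ∀ z : EuclideanSpace ℝ (Fin d), B z = -(T (T z)) := fun z => rfl
  have hBinner : ∀ z y : EuclideanSpace ℝ (Fin d), ⟪B z, y⟫ = ⟪T z, T y⟫ := by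
    intro z y
    rw [hBapp, inner_neg_left, hskew (T z) y, neg_neg]
  have hBsym : B.IsSymmetric := by
    intro z y
    rw [hBinner]
    rw [real_inner_comm (B y) z] at *
    rw [hBinner y z, real_inner_comm]
  have hn : Module.finrank ℝ (EuclideanSpace ℝ (Fin d)) = d := finrank_euclideanSpace_fin
  set b := hBsym.eigenvectorBasis hn with hbdef
  set μ := hBsym.eigenvalues hn with hμdef
  have hmu : ∀ i, B (b i) = μ i • b i := fun i => by
    exact_mod_cast hBsym.apply_eigenvectorBasis hn i
  have hnorm1 : ∀ i, ‖(b i : EuclideanSpace ℝ (Fin d))‖ = 1 := fun i => b.orthonormal.1 i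
  have hTnorm : ∀ i, ‖T (b i)‖ ^ 2 = μ i := by
    intro i
    rw [← real_inner_self_eq_norm_sq, ← hBinner (b i) (b i), hmu i, real_inner_smul_left,
      real_inner_self_eq_norm_sq, hnorm1 i]
    ring
  have hmu_nonneg : ∀ i, 0 ≤ μ i := fun i => (hTnorm i) ▸ sq_nonneg _
  obtain ⟨m, hm⟩ := Finite.exists_max μ
  have hmax : μ m ≤ c ^ 2 := by
    by_cases hTm : T (b m) = 0
    · have : μ m = 0 := by rw [← hTnorm m, hTm]; simp
      rw [this]; positivity
    · set ν : ℝ := ‖T (b m)‖ with hν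
      have hν0 : 0 < ν := by rw [hν]; exact norm_pos_iff.mpr hTm
      set w : EuclideanSpace ℝ (Fin d) := ν⁻¹ • T (b m) with hw
      have hwn : ‖w‖ = 1 := by
        rw [hw, norm_smul]
        simp [abs_of_pos hν0, inv_mul_cancel₀ hν0.ne']
        exact inv_mul_cancel₀ hν0.ne'
      have hbmw : ⟪(b m : EuclideanSpace ℝ (Fin d)), T (b m)⟫ = 0 := by
        have h1 := hskew (b m) (b m)
        have h2 := real_inner_comm (T (b m)) (b m)
        linarith
      have horth : ⟪(b m : EuclideanSpace ℝ (Fin d)), w⟫ = 0 := by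
        rw [hw, real_inner_smul_right, hbmw, mul_zero]
      have horth' : ⟪w, (b m : EuclideanSpace ℝ (Fin d))⟫ = 0 := by
        rw [real_inner_comm]; exact horth
      have hon : Orthonormal ℝ ![b m, w] := by
        constructor
        · intro i
          fin_cases i
          · simpa using hnorm1 m
          · simpa using hwn
        · intro i j hij
          fin_cases i <;> fin_cases j
          · exact absurd rfl hij
          · simpa using horth
          · simpa using horth'
          · exact absurd rfl hij
      have hTTw : T (T (b m)) = -(μ m • b m) := by
        have := hmu m
        rw [hBapp] at this
        linear_combination (norm := module) -this
      have hTw : ‖T w‖ ^ 2 = μ m := by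
        rw [hw, _root_.map_smul, norm_smul, mul_pow, hTTw]
        rw [norm_neg, norm_smul]
        have hμm : μ m = ν ^ 2 := (hTnorm m).symm
        rw [hnorm1 m]
        simp only [Real.norm_eq_abs, sq_abs, mul_one]
        rw [hμm]
        field_simp
      have hpair := pair_hs_bound T hskew (b m) w hon
      rw [hTnorm m, hTw] at hpair
      nlinarith [hpair, hHS]
  have hTx2 : ‖T x‖ ^ 2 = ∑ i, μ i * ⟪x, b i⟫ ^ 2 := by
    have hAx : ‖T x‖ ^ 2 = ⟪x, B x⟫ := by
      rw [← real_inner_self_eq_norm_sq, ← hBinner x x, real_inner_comm]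
    rw [hAx, ← b.sum_inner_mul_inner x (B x)]
    refine Finset.sum_congr rfl fun i _ => ?_
    have : ⟪(b i : EuclideanSpace ℝ (Fin d)), B x⟫ = μ i * ⟪x, b i⟫ := by
      rw [← hBsym (b i) x, hmu i, inner_smul_left, real_inner_comm]
      simp
    rw [this]; ring
  have hsq : ‖T x‖ ^ 2 ≤ (c * ‖x‖) ^ 2 := by
    rw [hTx2]
    have h1 : ∑ i, μ i * ⟪x, b i⟫ ^ 2 ≤ ∑ i, c ^ 2 * ⟪x, b i⟫ ^ 2 := by
      refine Finset.sum_le_sum fun i _ => ?_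
      exact mul_le_mul_of_nonneg_right ((hm i).trans hmax) (sq_nonneg _)
    rw [← Finset.mul_sum, parseval_onb b x] at h1
    calc _ ≤ c ^ 2 * ‖x‖ ^ 2 := h1
      _ = (c * ‖x‖) ^ 2 := by ring
  have := Real.sqrt_le_sqrt hsq
  rwa [Real.sqrt_sq (norm_nonneg _), Real.sqrt_sq (by positivity)] at this

end Aux

section Psi

lemma psi2_eq_tsum (a : ℝ) :
    psi 2 a = ∑' n : ℕ, a ^ (n + 2) / (Nat.factorial (n + 2) : ℝ) := by
  have hsum : Summable (fun n : ℕ => a ^ n / (Nat.factorial n : ℝ)) :=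
    NormedSpace.expSeries_div_summable a
  have hexp : Real.exp a = ∑' n : ℕ, a ^ n / (Nat.factorial n : ℝ) := by
    rw [Real.exp_eq_exp_ℝ, NormedSpace.exp_eq_tsum_div]
  have hsplit := Summable.sum_add_tsum_nat_add 2 hsum
  unfold psi
  rw [hexp, ← hsplit]
  ring

lemma psi2_nonneg {a : ℝ} (ha : 0 ≤ a) : 0 ≤ psi 2 a := by
  rw [psi2_eq_tsum]
  exact tsum_nonneg fun n => by positivity

lemma psi2_mono {a b : ℝ} (ha : 0 ≤ a) (hab : a ≤ b) : psi 2 a ≤ psi 2 b := by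
  have hsa : Summable (fun n : ℕ => a ^ (n + 2) / (Nat.factorial (n + 2) : ℝ)) := by
    have h := NormedSpace.expSeries_div_summable a
    exact (summable_nat_add_iff 2).mpr h
  have hsb : Summable (fun n : ℕ => b ^ (n + 2) / (Nat.factorial (n + 2) : ℝ)) := by
    have h := NormedSpace.expSeries_div_summable b
    exact (summable_nat_add_iff 2).mpr h
  rw [psi2_eq_tsum, psi2_eq_tsum]
  refine Summable.tsum_le_tsum (fun n => ?_) hsa hsb
  exact div_le_div_of_nonneg_right (pow_le_pow_left₀ ha hab _) (by positivity)

lemma norm_exp_sub_one_sub_le {𝔸 : Type*} [NormedRing 𝔸] [NormedAlgebra ℝ 𝔸]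
    [CompleteSpace 𝔸] (x : 𝔸) :
    ‖NormedSpace.exp x - 1 - x‖ ≤ psi 2 ‖x‖ := by
  set f : ℕ → 𝔸 := fun n => ((Nat.factorial n : ℝ)⁻¹ : ℝ) • x ^ n with hf
  have hsum : Summable f := NormedSpace.expSeries_summable' x
  have hexp : NormedSpace.exp x = ∑' n, f n := by
    rw [NormedSpace.exp_eq_tsum ℝ]
  have hsplit := Summable.sum_add_tsum_nat_add 2 hsum
  have hrange : ∑ i ∈ Finset.range 2, f i = 1 + x := by
    simp [hf, Finset.sum_range_succ, Nat.factorial]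
  have hkey : NormedSpace.exp x - 1 - x = ∑' n, f (n + 2) := by
    rw [hexp, ← hsplit, hrange]
    abel
  rw [hkey]
  have hg : Summable (fun n : ℕ => ‖x‖ ^ (n + 2) / (Nat.factorial (n + 2) : ℝ)) := by
    have h := NormedSpace.expSeries_div_summable ‖x‖
    exact (summable_nat_add_iff 2).mpr h
  have hgs : HasSum (fun n : ℕ => ‖x‖ ^ (n + 2) / (Nat.factorial (n + 2) : ℝ)) (psi 2 ‖x‖) := by
    rw [psi2_eq_tsum]
    exact hg.hasSum
  refine tsum_of_norm_bounded hgs fun n => ?_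
  rw [hf]
  simp only [norm_smul, Real.norm_eq_abs]
  rw [abs_of_nonneg (by positivity), div_eq_inv_mul]
  exact mul_le_mul_of_nonneg_left (norm_pow_le' x (Nat.succ_le_succ (Nat.zero_le _)))
    (by positivity)

end Psi

section ExpComm

attribute [local instance] Matrix.linftyOpNormedRing Matrix.linftyOpNormedAlgebra

variable {d : ℕ}

noncomputable def PhiL : Matrix (Fin d) (Fin d) ℝ →ₗ[ℝ]
    (EuclideanSpace ℝ (Fin d) →L[ℝ] EuclideanSpace ℝ (Fin d)) where
  toFun := ⇑(toEuclideanCLM (𝕜 := ℝ))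
  map_add' := fun A B => map_add _ A B
  map_smul' := fun c A => map_smul _ c A

lemma cont_Phi : Continuous (⇑(toEuclideanCLM (𝕜 := ℝ) (n := Fin d))) :=
  (PhiL (d := d)).continuous_of_finiteDimensional

lemma exp_comm (A : Matrix (Fin d) (Fin d) ℝ) :
    toEuclideanCLM (𝕜 := ℝ) (NormedSpace.exp A) =
      NormedSpace.exp (toEuclideanCLM (𝕜 := ℝ) A) :=
  NormedSpace.map_exp (toEuclideanCLM (𝕜 := ℝ) (n := Fin d)) cont_Phi A

end ExpComm

/-- Under first-order stationarity `Σ_i ⟨[r] p_i, q_i⟩ = 0` for all `r`, one has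
`Σ_i ⟨(I − exp([r])) p_i, q_i⟩ ≤ ψ₂(‖r‖) σ_P σ_Q`. -/
theorem stationary_second_order_bound
    {d s n : ℕ}
    (e : {p : Fin d × Fin d // p.2 < p.1} ≃ Fin s)
    (p q : Fin n → EuclideanSpace ℝ (Fin d))
    (hstat : ∀ r : EuclideanSpace ℝ (Fin s), ∑ i, ⟪mulVecE (bracket e r) (p i), q i⟫ = 0) :
    ∀ r : EuclideanSpace ℝ (Fin s),
      ∑ i, ⟪mulVecE (1 - NormedSpace.exp (bracket e r)) (p i), q i⟫ ≤
        psi 2 ‖r‖ * Real.sqrt (∑ i, ‖p i‖ ^ 2) * Real.sqrt (∑ i, ‖q i‖ ^ 2) := by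
  intro r
  classical
  set A : Matrix (Fin d) (Fin d) ℝ := bracket e r with hA
  set T : EuclideanSpace ℝ (Fin d) →L[ℝ] EuclideanSpace ℝ (Fin d) :=
    toEuclideanCLM (𝕜 := ℝ) A with hT
  have hTapp : ∀ x : EuclideanSpace ℝ (Fin d), T x = Matrix.toEuclideanLin A x := fun x => rfl
  have hskewT : ∀ x y : EuclideanSpace ℝ (Fin d), ⟪T x, y⟫ = -⟪x, T y⟫ := by
    intro x y
    rw [hTapp, hTapp]
    exact inner_toEuclideanLin_skew A (bracket_skew e r) x y
  have hTnorm : ‖T‖ ≤ ‖r‖ := by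
    refine opnorm_le_of_skew T hskewT (norm_nonneg r) ?_
    have := hs_sum e r
    calc ∑ j, ‖T (EuclideanSpace.single j (1:ℝ))‖ ^ 2
        = ∑ j, ‖Matrix.toEuclideanLin A (EuclideanSpace.single j (1:ℝ))‖ ^ 2 := by
          exact Finset.sum_congr rfl fun j _ => by rw [hTapp]
      _ = 2 * ‖r‖ ^ 2 := this
      _ ≤ 2 * ‖r‖ ^ 2 := le_rfl
  -- the remainder operator
  set S : EuclideanSpace ℝ (Fin d) →L[ℝ] EuclideanSpace ℝ (Fin d) :=
    NormedSpace.exp T - 1 - T with hS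
  have hSnorm : ‖S‖ ≤ psi 2 ‖r‖ := by
    calc ‖S‖ ≤ psi 2 ‖T‖ := norm_exp_sub_one_sub_le T
      _ ≤ psi 2 ‖r‖ := psi2_mono (norm_nonneg T) hTnorm
  -- rewrite each term of the sum
  have hterm : ∀ i, ⟪mulVecE (1 - NormedSpace.exp A) (p i), q i⟫
      = -⟪S (p i), q i⟫ - ⟪T (p i), q i⟫ := by
    intro i
    have h1 : mulVecE (1 - NormedSpace.exp A) (p i)
        = (toEuclideanCLM (𝕜 := ℝ) (1 - NormedSpace.exp A)) (p i) := rfl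
    have h2 : toEuclideanCLM (𝕜 := ℝ) (1 - NormedSpace.exp A)
        = 1 - NormedSpace.exp T := by
      rw [map_sub, _root_.map_one, exp_comm]
    have h3 : (1 : EuclideanSpace ℝ (Fin d) →L[ℝ] EuclideanSpace ℝ (Fin d))
        - NormedSpace.exp T = -S - T := by
      rw [hS]; abel
    rw [h1, h2, h3]
    have : (-S - T) (p i) = -(S (p i)) - T (p i) := rfl
    rw [this, inner_sub_left, inner_neg_left]
  have hsum : ∑ i, ⟪mulVecE (1 - NormedSpace.exp A) (p i), q i⟫
      = -∑ i, ⟪S (p i), q i⟫ := by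
    rw [Finset.sum_congr rfl fun i _ => hterm i, Finset.sum_sub_distrib]
    have h0 : ∑ i, ⟪T (p i), q i⟫ = 0 := by
      have := hstat r
      rw [← this]
      exact Finset.sum_congr rfl fun i _ => by rw [hTapp]; rfl
    rw [h0, Finset.sum_neg_distrib]
    ring
  rw [hsum]
  -- Cauchy–Schwarz and operator norm bounds
  have hbound : -∑ i, ⟪S (p i), q i⟫ ≤ ‖S‖ * ∑ i, ‖p i‖ * ‖q i‖ := by
    rw [← Finset.sum_neg_distrib, Finset.mul_sum]
    refine Finset.sum_le_sum fun i _ => ?_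
    have h1 : -⟪S (p i), q i⟫ ≤ |⟪S (p i), q i⟫| := neg_le_abs _
    have h2 : |⟪S (p i), q i⟫| ≤ ‖S (p i)‖ * ‖q i‖ := abs_real_inner_le_norm _ _
    have h3 : ‖S (p i)‖ * ‖q i‖ ≤ (‖S‖ * ‖p i‖) * ‖q i‖ :=
      mul_le_mul_of_nonneg_right (S.le_opNorm _) (norm_nonneg _)
    calc -⟪S (p i), q i⟫ ≤ ‖S (p i)‖ * ‖q i‖ := h1.trans h2
      _ ≤ ‖S‖ * (‖p i‖ * ‖q i‖) := by rw [← mul_assoc]; exact h3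
  have hCS : ∑ i, ‖p i‖ * ‖q i‖
      ≤ Real.sqrt (∑ i, ‖p i‖ ^ 2) * Real.sqrt (∑ i, ‖q i‖ ^ 2) := by
    have h1 : (∑ i, ‖p i‖ * ‖q i‖) ^ 2 ≤ (∑ i, ‖p i‖ ^ 2) * ∑ i, ‖q i‖ ^ 2 :=
      Finset.sum_mul_sq_le_sq_mul_sq Finset.univ _ _
    have h2 : ∑ i, ‖p i‖ * ‖q i‖ = Real.sqrt ((∑ i, ‖p i‖ * ‖q i‖) ^ 2) := by
      rw [Real.sqrt_sq (Finset.sum_nonneg fun i _ => by positivity)]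
    rw [h2, ← Real.sqrt_mul (Finset.sum_nonneg fun i _ => by positivity)]
    exact Real.sqrt_le_sqrt h1
  calc -∑ i, ⟪S (p i), q i⟫ ≤ ‖S‖ * ∑ i, ‖p i‖ * ‖q i‖ := hbound
    _ ≤ psi 2 ‖r‖ * (Real.sqrt (∑ i, ‖p i‖ ^ 2) * Real.sqrt (∑ i, ‖q i‖ ^ 2)) := by
        refine mul_le_mul hSnorm hCS (Finset.sum_nonneg fun i _ => by positivity)
          (psi2_nonneg (norm_nonneg r))
    _ = psi 2 ‖r‖ * Real.sqrt (∑ i, ‖p i‖ ^ 2) * Real.sqrt (∑ i, ‖q i‖ ^ 2) := by ring
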